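/- If A is an n×n matrix over ℂ with ‖A‖₂ ≤ 1 and h₂(A) = 1, then A is unitary. -/

import Mathlib

open MeasureTheory
set_option maxHeartbeats 1000000

/-- The permanent of a complex square matrix. -/
noncomputable def perm {n : ℕ} (A : Matrix (Fin n) (Fin n) ℂ) : ℂ :=
  ∑ σ : Equiv.Perm (Fin n), ∏ i, A i (σ i)

/-- The operator 2-norm of a complex square matrix. -/
noncomputable def opNorm {n : ℕ} (A : Matrix (Fin n) (Fin n) ℂ) : ℝ :=
  ‖LinearMap.toContinuousLinearMap (Matrix.toEuclideanLin A)‖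

/-- Uniform probability measure parametrizing `n` i.i.d. points of the unit circle. -/
noncomputable def circleMeasure (n : ℕ) : Measure (Fin n → ℝ) :=
  Measure.pi fun _ => volume.restrict (Set.Icc 0 1)

/-- The random vector with i.i.d. coordinates uniform on the unit circle. -/
noncomputable def Xc {n : ℕ} (θ : Fin n → ℝ) : Fin n → ℂ :=
  fun i => Complex.exp (2 * Real.pi * Complex.I * (θ i))

/-- Average of the ℓ∞-norms of the rows of A. -/
noncomputable def hInf {n : ℕ} (A : Matrix (Fin n) (Fin n) ℂ) : ℝ :=
  (∑ i, ⨆ j, ‖A i j‖) / n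

/-- Average of the ℓ₂-norms of the rows of A. -/
noncomputable def hTwo {n : ℕ} (A : Matrix (Fin n) (Fin n) ℂ) : ℝ :=
  (∑ i, Real.sqrt (∑ j, ‖A i j‖ ^ 2)) / n

open scoped Matrix ComplexOrder

lemma dp_star_self {n : ℕ} (v : Fin n → ℂ) :
    dotProduct (star v) v = ((∑ i, ‖v i‖ ^ 2 : ℝ) : ℂ) := by
  push_cast
  simp [dotProduct, Complex.star_def, mul_comm, Complex.mul_conj, ← Complex.sq_norm]

open scoped Matrix.Norms.L2Operator in
lemma mulVec_sq_sum_le {n : ℕ} (A : Matrix (Fin n) (Fin n) ℂ) (hA : opNorm A ≤ 1)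
    (x : Fin n → ℂ) :
    ∑ i, ‖(Aᴴ *ᵥ x) i‖ ^ 2 ≤ ∑ i, ‖x i‖ ^ 2 := by
  have hAH : ‖Aᴴ‖ ≤ 1 := by
    rw [Matrix.l2_opNorm_conjTranspose]
    exact hA
  set x' : EuclideanSpace ℂ (Fin n) := (WithLp.equiv 2 (Fin n → ℂ)).symm x with hx'
  have key := Matrix.l2_opNorm_mulVec Aᴴ x'
  have h1 : ‖(EuclideanSpace.equiv (Fin n) ℂ).symm (Aᴴ *ᵥ x')‖
      ≤ ‖x'‖ := key.trans (by
    calc ‖Aᴴ‖ * ‖x'‖ ≤ 1 * ‖x'‖ := by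
          exact mul_le_mul_of_nonneg_right hAH (norm_nonneg _)
      _ = ‖x'‖ := one_mul _)
  rw [EuclideanSpace.norm_eq, EuclideanSpace.norm_eq] at h1
  have h2 : ∀ v : Fin n → ℂ, ∑ i, ‖v i‖ ^ 2 = ∑ i, ‖v i‖ ^ 2 := by
    intro v; simp
  have hx'' : (Aᴴ *ᵥ (x' : Fin n → ℂ)) = Aᴴ *ᵥ x := rfl
  have := (Real.sqrt_le_sqrt_iff (by positivity)).mp h1
  calc ∑ i, ‖(Aᴴ *ᵥ x) i‖ ^ 2
      = ∑ i, ‖((EuclideanSpace.equiv (Fin n) ℂ).symm (Aᴴ *ᵥ x') : EuclideanSpace ℂ (Fin n)) i‖ ^ 2 := by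
        rw [h2]; rfl
    _ ≤ ∑ i, ‖x' i‖ ^ 2 := this
    _ = ∑ i, ‖x i‖ ^ 2 := by rw [h2]; rfl

/-- If `‖A‖₂ ≤ 1` and `h₂(A) = 1`, then A is unitary. -/
theorem hTwo_eq_one_unitary {n : ℕ} (A : Matrix (Fin n) (Fin n) ℂ)
    (hA : opNorm A ≤ 1) (h : hTwo A = 1) :
    A ∈ Matrix.unitaryGroup (Fin n) ℂ := by
  classical
  -- PSD of 1 - A * Aᴴ
  have hPSD : Matrix.PosSemidef (1 - A * Aᴴ) := by
    refine Matrix.PosSemidef.of_dotProduct_mulVec_nonneg ?_ ?_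
    · unfold Matrix.IsHermitian
      simp [Matrix.conjTranspose_sub, Matrix.conjTranspose_mul]
    · intro x
      have expand : dotProduct (star x) ((1 - A * Aᴴ) *ᵥ x)
          = dotProduct (star x) x
            - dotProduct (star (Aᴴ *ᵥ x)) (Aᴴ *ᵥ x) := by
        rw [Matrix.sub_mulVec, dotProduct_sub, Matrix.one_mulVec]
        congr 1
        rw [← Matrix.mulVec_mulVec, Matrix.star_mulVec, Matrix.conjTranspose_conjTranspose,
          ← Matrix.dotProduct_mulVec]
      rw [expand, dp_star_self, dp_star_self, ← Complex.ofReal_sub]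
      rw [Complex.zero_le_real]
      have := mulVec_sq_sum_le A hA x
      linarith
  -- diagonal entries of A * Aᴴ
  have hdiag : ∀ i, ((A * Aᴴ) i i) = ((∑ j, ‖A i j‖ ^ 2 : ℝ) : ℂ) := by
    intro i
    rw [Matrix.mul_apply]
    push_cast
    simp [Matrix.conjTranspose_apply, Complex.mul_conj, ← Complex.sq_norm]
  -- each row norm squared ≤ 1
  have hrow_le : ∀ i, ∑ j, ‖A i j‖ ^ 2 ≤ 1 := by
    intro i
    have := hPSD.dotProduct_mulVec_nonneg (Pi.single i 1)
    have hval : dotProduct (star (Pi.single i 1)) ((1 - A * Aᴴ) *ᵥ (Pi.single i 1))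
        = (1 - A * Aᴴ) i i := by
      rw [Matrix.mulVec_single]
      simp [dotProduct, Pi.single_apply, apply_ite, mul_comm]
    rw [hval] at this
    have : (0 : ℂ) ≤ ((1 - ∑ j, ‖A i j‖ ^ 2 : ℝ) : ℂ) := by
      convert this using 1
      rw [Matrix.sub_apply, hdiag i]
      push_cast
      simp
    rw [Complex.zero_le_real] at this
    linarith
  -- n ≠ 0
  have hn : (n : ℝ) ≠ 0 := by
    intro h0
    rw [hTwo, h0, div_zero] at h
    norm_num at h
  -- each row norm squared = 1
  have hsum : ∑ i, Real.sqrt (∑ j, ‖A i j‖ ^ 2) = n := by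
    rw [hTwo, div_eq_one_iff_eq hn] at h
    exact h
  have hrow_eq : ∀ i, ∑ j, ‖A i j‖ ^ 2 = 1 := by
    have key : ∀ i ∈ Finset.univ, (1 : ℝ) - Real.sqrt (∑ j, ‖A i j‖ ^ 2) = 0 := by
      rw [← Finset.sum_eq_zero_iff_of_nonneg]
      · rw [Finset.sum_sub_distrib, hsum]
        simp
      · intro i _
        have h1 : Real.sqrt (∑ j, ‖A i j‖ ^ 2) ≤ 1 := by
          rw [show (1:ℝ) = Real.sqrt 1 by simp]
          exact Real.sqrt_le_sqrt (by simpa using hrow_le i)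
        linarith
    intro i
    have h1 := key i (Finset.mem_univ i)
    have h2 : Real.sqrt (∑ j, ‖A i j‖ ^ 2) = 1 := by linarith
    have h3 := Real.sq_sqrt (show (0:ℝ) ≤ ∑ j, ‖A i j‖ ^ 2 by positivity)
    rw [h2] at h3
    simpa using h3.symm
  -- trace of 1 - A * Aᴴ is zero
  have htr : Matrix.trace (1 - A * Aᴴ) = 0 := by
    rw [Matrix.trace_sub, Matrix.trace_one]
    have : Matrix.trace (A * Aᴴ) = (n : ℂ) := by
      rw [Matrix.trace]
      simp only [Matrix.diag_apply]
      rw [Finset.sum_congr rfl (fun i _ => hdiag i)]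
      rw [Finset.sum_congr rfl (fun i _ => by rw [hrow_eq i])]
      simp
    rw [this]
    simp [Matrix.one_apply]
  -- PSD with zero trace is zero
  have hzero : (1 : Matrix (Fin n) (Fin n) ℂ) - A * Aᴴ = 0 := by
    open scoped MatrixOrder in
    obtain ⟨B, hB⟩ := CStarAlgebra.nonneg_iff_eq_star_mul_self.mp hPSD.nonneg
    rw [Matrix.star_eq_conjTranspose] at hB
    have htrB : Matrix.trace (Bᴴ * B) = 0 := by rw [← hB]; exact htr
    have htrB' : ((∑ j, ∑ k, ‖B k j‖ ^ 2 : ℝ) : ℂ) = 0 := by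
      rw [← htrB, Matrix.trace]
      push_cast
      simp [Matrix.diag_apply, Matrix.mul_apply, Matrix.conjTranspose_apply,
        mul_comm, Complex.mul_conj, ← Complex.sq_norm]
    have hsum0 : ∑ j, ∑ k, ‖B k j‖ ^ 2 = 0 := by
      exact_mod_cast htrB'
    have hBzero : B = 0 := by
      ext k j
      have h1 : ∀ j ∈ Finset.univ, ∑ k, ‖B k j‖ ^ 2 = 0 := by
        rw [← Finset.sum_eq_zero_iff_of_nonneg] <;> [exact hsum0; (intro j _; positivity)]
      have h2 : ∀ k ∈ Finset.univ, ‖B k j‖ ^ 2 = 0 := by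
        rw [← Finset.sum_eq_zero_iff_of_nonneg] <;>
          [exact h1 j (Finset.mem_univ j); (intro k _; positivity)]
      have := h2 k (Finset.mem_univ k)
      simpa [pow_eq_zero_iff] using this
    rw [hB, hBzero]
    simp
  have : A * Aᴴ = 1 := by
    have := sub_eq_zero.mp hzero
    exact this.symm
  rw [Matrix.mem_unitaryGroup_iff]
  exact this
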